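/- Every comeager subset of Cantor space contains the body of a Silver tree: if Y ⊆ 2^ω is comeager (its complement is meager), then there exists a Silver tree T such that [T] ⊆ Y. -/

import Mathlib

/-- `T` is a tree of finite binary sequences: closed under initial segments. -/
def IsTree (T : Set (List Bool)) : Prop :=
  ∀ t ∈ T, ∀ k : ℕ, t.take k ∈ T

/-- `t` is a splitting node of `T`: it lies in `T` and both its one-bit extensions do. -/
def SplitNode (T : Set (List Bool)) (t : List Bool) : Prop :=
  t ∈ T ∧ t ++ [false] ∈ T ∧ t ++ [true] ∈ T

/-- `T` is a perfect tree: a nonempty tree in which every node extends to a splitting node. -/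
def IsPerfect (T : Set (List Bool)) : Prop :=
  IsTree T ∧ T.Nonempty ∧ ∀ t ∈ T, ∃ s, t <+: s ∧ SplitNode T s

/-- `T` is a Silver (uniform perfect) tree: perfect, and nodes of equal length
have the same one-bit extensions in `T`. -/
def IsSilver (T : Set (List Bool)) : Prop :=
  IsPerfect T ∧ ∀ s ∈ T, ∀ t ∈ T, s.length = t.length →
    ∀ i : Bool, (s ++ [i] ∈ T ↔ t ++ [i] ∈ T)

/-- The body `[T]` of a tree: all infinite branches whose finite initial
segments all lie in `T`. -/
def body (T : Set (List Bool)) : Set (ℕ → Bool) :=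
  { x | ∀ n : ℕ, (List.ofFn fun i : Fin n => x i) ∈ T }


/-- The basic clopen cylinder determined by a finite list. -/
def cyl (l : List Bool) : Set (ℕ → Bool) :=
  { x | ∀ i : ℕ, ∀ h : i < l.length, x i = l[i] }

lemma isOpen_cyl (l : List Bool) : IsOpen (cyl l) := by
  have : cyl l = ⋂ i : Fin l.length, (fun x : ℕ → Bool => x i) ⁻¹' {l[(i : ℕ)]} := by
    ext x
    simp only [cyl, Set.mem_setOf_eq, Set.mem_iInter, Set.mem_preimage, Set.mem_singleton_iff]
    constructor
    · intro h i; exact h i i.2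
    · intro h i hi; exact h ⟨i, hi⟩
  rw [this]
  exact isOpen_iInter_of_finite fun i => (continuous_apply (i : ℕ)).isOpen_preimage _ trivial

lemma cyl_nonempty (l : List Bool) : (cyl l).Nonempty := by
  refine ⟨fun i => if h : i < l.length then l[i] else false, ?_⟩
  intro i h; simp [h]

lemma mem_cyl_ofFn (x : ℕ → Bool) (n : ℕ) : x ∈ cyl (List.ofFn fun i : Fin n => x i) := by
  intro i h
  rw [List.getElem_ofFn]

lemma cyl_mono {l₁ l₂ : List Bool} (h : l₁ <+: l₂) : cyl l₂ ⊆ cyl l₁ := by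
  intro x hx i hi
  rw [hx i (lt_of_lt_of_le hi h.length_le), h.getElem hi]

lemma prefix_of_getElem {l₁ l₂ : List Bool} (hlen : l₁.length ≤ l₂.length)
    (h : ∀ i : ℕ, ∀ h1 : i < l₁.length, ∀ h2 : i < l₂.length, l₁[i] = l₂[i]) : l₁ <+: l₂ := by
  rw [List.prefix_iff_eq_take]
  apply List.ext_getElem
  · simp [Nat.min_eq_left hlen]
  · intro i h1 h2
    rw [List.getElem_take]
    exact h i h1 (lt_of_lt_of_le h1 hlen)

/-- In an open set, each point has a cylinder neighborhood. -/
lemma exists_cyl_nbhd {U : Set (ℕ → Bool)} (hU : IsOpen U) {y : ℕ → Bool} (hy : y ∈ U) :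
    ∃ n : ℕ, ∀ z : ℕ → Bool, (∀ i < n, z i = y i) → z ∈ U := by
  obtain ⟨I, u, hIu, hsub⟩ := isOpen_pi_iff.mp hU y hy
  refine ⟨(I.sup id) + 1, fun z hz => hsub ?_⟩
  intro i hi
  rw [hz i (Nat.lt_succ_of_le (Finset.le_sup (f := id) hi))]
  exact (hIu i hi).2

/-- Density: every cylinder can be extended to a cylinder inside a dense open set. -/
lemma dense_extend {U : Set (ℕ → Bool)} (hO : IsOpen U) (hD : Dense U) (l : List Bool) :
    ∃ e : List Bool, l <+: e ∧ cyl e ⊆ U := by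
  obtain ⟨y, hyc, hyU⟩ := hD.inter_open_nonempty (cyl l) (isOpen_cyl l) (cyl_nonempty l)
  obtain ⟨n, hn⟩ := exists_cyl_nbhd hO hyU
  refine ⟨List.ofFn (fun i : Fin (max n l.length) => y i), ?_, ?_⟩
  · apply prefix_of_getElem
    · simp
    · intro i h1 h2
      rw [List.getElem_ofFn]
      exact (hyc i h1).symm
  · intro z hz
    apply hn
    intro i hi
    have h2 : i < (List.ofFn fun i : Fin (max n l.length) => y i).length := by
      simp; exact Or.inl hi
    rw [hz i h2, List.getElem_ofFn]
/-- Modify the entries of `e` at positions in `P` to agree with `x`. -/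
def modif (e : List Bool) (P : Finset ℕ) (x : ℕ → Bool) : List Bool :=
  List.ofFn fun i : Fin e.length => if (i : ℕ) ∈ P then x i else e[(i : ℕ)]

lemma modify_length (e : List Bool) (P : Finset ℕ) (x : ℕ → Bool) :
    (modif e P x).length = e.length := by simp [modif]

lemma modify_getElem (e : List Bool) (P : Finset ℕ) (x : ℕ → Bool) (i : ℕ)
    (h : i < (modif e P x).length) :
    (modif e P x)[i] = if i ∈ P then x i else e[i]'(by rwa [modify_length] at h) := by
  simp only [modif, List.getElem_ofFn]

lemma modify_empty (e : List Bool) (x : ℕ → Bool) : modif e ∅ x = e := by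
  simp [modif, List.ofFn_getElem]

/-- Key extension lemma: we can extend `c` so that every `P`-modification of the
extension has its cylinder inside the dense open set `U`. -/
lemma extLemma {U : Set (ℕ → Bool)} (hO : IsOpen U) (hD : Dense U) (P : Finset ℕ) :
    ∀ c : List Bool, ∃ e : List Bool, c <+: e ∧
      ((∀ q ∈ P, q < c.length) → ∀ x : ℕ → Bool, cyl (modif e P x) ⊆ U) := by
  induction P using Finset.induction_on with
  | empty =>
    intro c
    obtain ⟨e, hpre, hsub⟩ := dense_extend hO hD c
    exact ⟨e, hpre, fun _ x => by rw [modify_empty]; exact hsub⟩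
  | @insert p Q hpQ IH =>
    intro c
    by_cases hp : ∀ q ∈ insert p Q, q < c.length
    · have hpc : p < c.length := hp p (Finset.mem_insert_self p Q)
      obtain ⟨e₀, h0pre, h0⟩ := IH (c.set p false)
      obtain ⟨e₁, h1pre, h1⟩ := IH (e₀.set p true)
      have hle0 : c.length ≤ e₀.length := by
        have := h0pre.length_le; simpa using this
      have hle1 : e₀.length ≤ e₁.length := by
        have := h1pre.length_le; simpa using this
      have hpe1 : p < e₁.length := lt_of_lt_of_le (lt_of_lt_of_le hpc hle0) hle1
      obtain ⟨cp, hcp⟩ : ∃ b : Bool, c.get ⟨p, hpc⟩ = b := ⟨_, rfl⟩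
      refine ⟨e₁.set p cp, ?_, ?_⟩
      · apply prefix_of_getElem
        · simpa using le_trans hle0 hle1
        · intro i h1i h2i
          rw [List.getElem_set]
          by_cases hip : p = i
          · subst hip; rw [if_pos rfl]; simpa using hcp
          · rw [if_neg hip]
            have hie0 : i < e₀.length := lt_of_lt_of_le h1i hle0
            have : e₁[i]'(by simpa using h2i) = e₀[i] := by
              have := h1pre.getElem (i := i) (by simpa using hie0)
              rw [List.getElem_set, if_neg hip] at this
              exact this.symm
            rw [this]
            have := h0pre.getElem (i := i) (by simpa using h1i)
            rw [List.getElem_set, if_neg hip] at this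
            exact this
      · -- main containment
        intro _ x
        have hQc0 : ∀ q ∈ Q, q < (c.set p false).length := by
          intro q hq; simpa using hp q (Finset.mem_insert_of_mem hq)
        have hQe0 : ∀ q ∈ Q, q < (e₀.set p true).length := by
          intro q hq; simpa using lt_of_lt_of_le (hp q (Finset.mem_insert_of_mem hq)) hle0
        -- values of e₀, e₁ at p
        have he0p : e₀[p]'(lt_of_lt_of_le hpc hle0) = false := by
          have := h0pre.getElem (i := p) (by simpa using hpc)
          rw [List.getElem_set, if_pos rfl] at this
          exact this.symm
        have he1p : e₁[p]'hpe1 = true := by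
          have := h1pre.getElem (i := p) (by simpa using lt_of_lt_of_le hpc hle0)
          rw [List.getElem_set, if_pos rfl] at this
          exact this.symm
        have hlene : (e₁.set p cp).length = e₁.length := by simp
        -- modified list at non-p positions agrees with e₁
        cases hx : x p with
        | true =>
          have hmod : modif (e₁.set p cp) (insert p Q) x = modif e₁ Q x := by
            apply List.ext_getElem
            · simp [modify_length, hlene]
            · intro i hi hi'
              rw [modify_getElem, modify_getElem]
              by_cases hip : i = p
              · subst hip
                rw [if_pos (Finset.mem_insert_self _ _), if_neg hpQ, he1p, hx]
              · have hiQ : i ∈ insert p Q ↔ i ∈ Q := by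
                  simp [Finset.mem_insert, hip]
                by_cases hiq : i ∈ Q
                · rw [if_pos (hiQ.mpr hiq), if_pos hiq]
                · rw [if_neg (fun hh => hiq (hiQ.mp hh)), if_neg hiq]
                  rw [List.getElem_set, if_neg (fun hh => hip hh.symm)]
          rw [hmod]
          exact h1 hQe0 x
        | false =>
          have hpref : modif e₀ Q x <+: modif (e₁.set p cp) (insert p Q) x := by
            apply prefix_of_getElem
            · rw [modify_length, modify_length, hlene]; exact hle1
            · intro i h1i h2i
              rw [modify_getElem, modify_getElem]
              have hie0 : i < e₀.length := by rwa [modify_length] at h1i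
              by_cases hip : i = p
              · subst hip
                rw [if_pos (Finset.mem_insert_self _ _), if_neg hpQ, he0p, hx]
              · have hiQ : i ∈ insert p Q ↔ i ∈ Q := by
                  simp [Finset.mem_insert, hip]
                by_cases hiq : i ∈ Q
                · rw [if_pos (hiQ.mpr hiq), if_pos hiq]
                · rw [if_neg (fun hh => hiq (hiQ.mp hh)), if_neg hiq]
                  rw [List.getElem_set, if_neg (fun hh => hip hh.symm)]
                  have := h1pre.getElem (i := i) (by simpa using hie0)
                  rw [List.getElem_set, if_neg (fun hh => hip hh.symm)] at this
                  exact this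
          exact fun z hz => h0 hQc0 x (cyl_mono hpref hz)
    · exact ⟨c, List.prefix_refl c, fun h => absurd h hp⟩

namespace SilverAux

variable (U : ℕ → Set (ℕ → Bool)) (hO : ∀ n, IsOpen (U n)) (hD : ∀ n, Dense (U n))

/-- The fusion sequence: at each stage, a finite approximation (a list) together
with the finite set of splitting positions created so far. -/
noncomputable def g : ℕ → List Bool × Finset ℕ :=
  fun n => Nat.rec (motive := fun _ => List Bool × Finset ℕ) (([], ∅))
    (fun n ih =>
      ((extLemma (hO n) (hD n) (insert ih.1.length ih.2) (ih.1 ++ [false])).choose,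
        insert ih.1.length ih.2)) n

noncomputable def cs (n : ℕ) : List Bool := (g U hO hD n).1
noncomputable def ps (n : ℕ) : Finset ℕ := (g U hO hD n).2

lemma cs_zero : cs U hO hD 0 = [] := rfl
lemma ps_zero : ps U hO hD 0 = ∅ := rfl
lemma ps_succ (n : ℕ) :
    ps U hO hD (n+1) = insert (cs U hO hD n).length (ps U hO hD n) := rfl

lemma g_spec (n : ℕ) :
    (cs U hO hD n ++ [false]) <+: cs U hO hD (n+1) ∧
      ((∀ q ∈ insert (cs U hO hD n).length (ps U hO hD n), q < (cs U hO hD n ++ [false]).length) →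
        ∀ x : ℕ → Bool,
          cyl (modif (cs U hO hD (n+1)) (insert (cs U hO hD n).length (ps U hO hD n)) x) ⊆ U n) :=
  (extLemma (hO n) (hD n) (insert (cs U hO hD n).length (ps U hO hD n))
    (cs U hO hD n ++ [false])).choose_spec

lemma cs_len_lt (n : ℕ) : (cs U hO hD n).length < (cs U hO hD (n+1)).length := by
  have := (g_spec U hO hD n).1.length_le
  simp only [List.length_append, List.length_cons, List.length_nil] at this
  omega

lemma cs_step (n : ℕ) : cs U hO hD n <+: cs U hO hD (n+1) :=
  (List.prefix_append _ _).trans (g_spec U hO hD n).1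

lemma cs_mono {m n : ℕ} (h : m ≤ n) : cs U hO hD m <+: cs U hO hD n := by
  induction n, h using Nat.le_induction with
  | base => exact List.prefix_refl _
  | succ n hmn ih => exact ih.trans (cs_step U hO hD n)

lemma cs_len_ge (n : ℕ) : n ≤ (cs U hO hD n).length := by
  induction n with
  | zero => exact Nat.zero_le _
  | succ n ih => exact Nat.lt_of_le_of_lt ih (cs_len_lt U hO hD n)

lemma ps_bound (n : ℕ) : ∀ q ∈ ps U hO hD n, q < (cs U hO hD n).length := by
  induction n with
  | zero => intro q hq; simp [ps_zero] at hq
  | succ n ih =>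
    intro q hq
    rw [ps_succ] at hq
    rcases Finset.mem_insert.mp hq with h | h
    · rw [h]; exact cs_len_lt U hO hD n
    · exact lt_trans (ih q h) (cs_len_lt U hO hD n)

lemma key (n : ℕ) (x : ℕ → Bool) :
    cyl (modif (cs U hO hD (n+1)) (ps U hO hD (n+1)) x) ⊆ U n := by
  rw [ps_succ]
  apply (g_spec U hO hD n).2
  intro q hq
  rcases Finset.mem_insert.mp hq with h | h
  · rw [h]; simp
  · have := ps_bound U hO hD n q h
    simp only [List.length_append, List.length_cons, List.length_nil]
    omega

lemma ps_mono {m n : ℕ} (h : m ≤ n) : ps U hO hD m ⊆ ps U hO hD n := by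
  induction n, h using Nat.le_induction with
  | base => exact subset_rfl
  | succ n hmn ih =>
    refine ih.trans ?_
    rw [ps_succ]
    exact Finset.subset_insert _ _

lemma len_mem_ps (n : ℕ) : (cs U hO hD n).length ∈ ps U hO hD (n+1) := by
  rw [ps_succ]; exact Finset.mem_insert_self _ _

/-- The limit branch values (off the splitting positions). -/
noncomputable def bfun (i : ℕ) : Bool := (cs U hO hD (i+1)).getD i false

lemma cs_getElem_eq_bfun (n i : ℕ) (h : i < (cs U hO hD n).length) :
    (cs U hO hD n)[i] = bfun U hO hD i := by
  have hi1 : i < (cs U hO hD (i+1)).length :=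
    Nat.lt_of_le_of_lt (cs_len_ge U hO hD i) (cs_len_lt U hO hD i)
  have : (cs U hO hD n)[i] = (cs U hO hD (i+1))[i] := by
    rcases le_total n (i+1) with hle | hle
    · exact (cs_mono U hO hD hle).getElem h
    · exact ((cs_mono U hO hD hle).getElem hi1).symm
  rw [this, bfun, List.getD_eq_getElem _ _ hi1]

/-- Splitting positions below the current length are already recorded. -/
lemma mem_ps_of_lt (n m : ℕ) (h : (cs U hO hD m).length < (cs U hO hD (n+1)).length) :
    (cs U hO hD m).length ∈ ps U hO hD (n+1) := by
  rcases le_or_gt m n with hle | hlt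
  · exact ps_mono U hO hD (Nat.succ_le_succ hle) (len_mem_ps U hO hD m)
  · exfalso
    have := (cs_mono U hO hD (Nat.succ_le_of_lt hlt)).length_le
    simp only [Nat.succ_eq_add_one] at this
    omega

/-- The Silver tree. -/
def Tr : Set (List Bool) :=
  { t | ∀ i : ℕ, ∀ h : i < t.length,
      (∃ m, (cs U hO hD m).length = i) ∨ t[i] = bfun U hO hD i }

lemma Tr_isTree : IsTree (Tr U hO hD) := by
  intro t ht k i hi
  have hik : i < t.length := lt_of_lt_of_le hi (by simpa using (List.take_prefix k t).length_le)
  rcases ht i hik with h | h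
  · exact Or.inl h
  · right
    rw [List.getElem_take]
    exact h

lemma nil_mem_Tr : [] ∈ Tr U hO hD := by
  intro i hi; simp at hi

lemma append_mem_Tr_iff {t : List Bool} (ht : t ∈ Tr U hO hD) (i : Bool) :
    t ++ [i] ∈ Tr U hO hD ↔
      ((∃ m, (cs U hO hD m).length = t.length) ∨ i = bfun U hO hD t.length) := by
  constructor
  · intro h
    have hl : t.length < (t ++ [i]).length := by simp
    rcases h t.length hl with hh | hh
    · exact Or.inl hh
    · right
      rw [← hh, List.getElem_concat_length (l := t) (a := i) (i := t.length) rfl]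
  · intro h j hj
    by_cases hjt : j < t.length
    · rcases ht j hjt with hh | hh
      · exact Or.inl hh
      · right; rw [List.getElem_append_left hjt]; exact hh
    · have hjeq : j = t.length := by
        simp only [List.length_append, List.length_cons, List.length_nil] at hj
        omega
      subst hjeq
      rcases h with hh | hh
      · exact Or.inl hh
      · right; rw [List.getElem_concat_length (l := t) (a := i) (i := t.length) rfl]; exact hh

lemma split_of_len (t : List Bool) (ht : t ∈ Tr U hO hD)
    (h : ∃ m, (cs U hO hD m).length = t.length) : SplitNode (Tr U hO hD) t :=
  ⟨ht, (append_mem_Tr_iff U hO hD ht false).mpr (Or.inl h),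
    (append_mem_Tr_iff U hO hD ht true).mpr (Or.inl h)⟩

lemma Tr_extend (t : List Bool) (ht : t ∈ Tr U hO hD) :
    ∃ s, t <+: s ∧ SplitNode (Tr U hO hD) s := by
  set n := t.length with hn
  have hle : t.length ≤ (cs U hO hD n).length := cs_len_ge U hO hD n
  set s : List Bool :=
    t ++ List.ofFn (fun j : Fin ((cs U hO hD n).length - t.length) =>
      bfun U hO hD (t.length + j)) with hs
  have hslen : s.length = (cs U hO hD n).length := by
    simp [hs]; omega
  have hsT : s ∈ Tr U hO hD := by
    intro i hi
    by_cases hit : i < t.length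
    · rcases ht i hit with h | h
      · exact Or.inl h
      · right; simp only [hs]; rw [List.getElem_append_left hit]; exact h
    · right
      push_neg at hit
      simp only [hs]
      rw [List.getElem_append_right hit, List.getElem_ofFn]
      congr 1
      show t.length + (i - t.length) = i
      omega
  refine ⟨s, List.prefix_append _ _, split_of_len U hO hD s hsT ⟨n, ?_⟩⟩
  rw [hslen]

lemma Tr_isSilver : IsSilver (Tr U hO hD) := by
  refine ⟨⟨Tr_isTree U hO hD, ⟨[], nil_mem_Tr U hO hD⟩, Tr_extend U hO hD⟩, ?_⟩
  intro s hs t ht hlen i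
  rw [append_mem_Tr_iff U hO hD hs i, append_mem_Tr_iff U hO hD ht i, hlen]

lemma body_subset : body (Tr U hO hD) ⊆ ⋂ n, U n := by
  intro x hx
  have hxx : ∀ i : ℕ, (∃ m, (cs U hO hD m).length = i) ∨ x i = bfun U hO hD i := by
    intro i
    have h := hx (i+1) i (by simp)
    rwa [List.getElem_ofFn] at h
  apply Set.mem_iInter.mpr
  intro n
  apply key U hO hD n x
  intro i hi
  rw [modify_length] at hi
  rw [modify_getElem]
  by_cases hip : i ∈ ps U hO hD (n+1)
  · rw [if_pos hip]
  · rw [if_neg hip]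
    rcases hxx i with ⟨m, hm⟩ | h
    · exfalso
      apply hip
      rw [← hm]
      exact mem_ps_of_lt U hO hD n m (hm ▸ hi)
    · rw [h, cs_getElem_eq_bfun U hO hD (n+1) i hi]

end SilverAux

namespace SilverAux

lemma main_lemma (U : ℕ → Set (ℕ → Bool)) (hO : ∀ n, IsOpen (U n)) (hD : ∀ n, Dense (U n)) :
    ∃ T : Set (List Bool), IsSilver T ∧ body T ⊆ ⋂ n, U n :=
  ⟨Tr U hO hD, Tr_isSilver U hO hD, body_subset U hO hD⟩

end SilverAux

/-- Every comeager subset of Cantor space contains the body of a Silver tree. -/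
theorem comeager_contains_silver_body (Y : Set (ℕ → Bool)) (hY : IsMeagre Yᶜ) :
    ∃ T : Set (List Bool), IsSilver T ∧ body T ⊆ Y := by
  have hY' : Y ∈ residual (ℕ → Bool) := by
    rw [IsMeagre, compl_compl] at hY
    exact hY
  obtain ⟨S, hSo, hSd, hSc, hSY⟩ := mem_residual_iff.mp hY'
  obtain ⟨f, hf⟩ := (hSc.insert Set.univ).exists_eq_range (Set.insert_nonempty _ _)
  have hmem : ∀ n, f n ∈ insert Set.univ S := by
    intro n; rw [hf]; exact Set.mem_range_self n
  have hfo : ∀ n, IsOpen (f n) := by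
    intro n
    rcases (Set.mem_insert_iff.mp (hmem n)) with h | h
    · rw [h]; exact isOpen_univ
    · exact hSo _ h
  have hfd : ∀ n, Dense (f n) := by
    intro n
    rcases (Set.mem_insert_iff.mp (hmem n)) with h | h
    · rw [h]; exact dense_univ
    · exact hSd _ h
  obtain ⟨T, hT, hTsub⟩ := SilverAux.main_lemma f hfo hfd
  refine ⟨T, hT, fun x hx => ?_⟩
  apply hSY
  intro s hs
  have hs' : s ∈ Set.range f := by rw [← hf]; exact Set.mem_insert_of_mem _ hs
  obtain ⟨n, rfl⟩ := hs'
  exact Set.mem_iInter.mp (hTsub hx) n
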